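/- Tails do not modify existing store locations: for every tail Q (a sequence of calls to top-level functions whose parameters are side-effect-free expressions, possibly with one nested call as last argument), if Q, s ⇓_{ρ, F} v, s' under the naive semantics for lambda-lifted programs, then s ⊑ s', i.e. s'|_{dom(s)} = s. -/

import Mathlib

namespace CPC

abbrev Loc := Nat
abbrev Var := String

inductive Val : Type
  | unit | tt | ff
  | nat (n : Nat)
deriving DecidableEq

inductive Tm : Type
  | val (v : Val)
  | var (x : Var)
  | assign (x : Var) (t : Tm)
  | ite (c t e : Tm)
  | seq (a b : Tm)
  | letrec (f : Var) (ps : List Var) (body rest : Tm)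
  | call (f : Var) (args : List Tm)

abbrev Env := Var → Option Loc
abbrev Store := Loc → Option Val

def emptyEnv : Env := fun _ => none
def emptyStore : Store := fun _ => none

/-- Modification (extension) of a partial function. -/
def updFn {α β : Type} [DecidableEq α] (f : α → Option β) (x : α) (y : β) :
    α → Option β :=
  fun t => if t = x then some y else f t

/-- Concatenation of environments: leftmost binding wins. -/
def envCat (ρ₁ ρ₂ : Env) : Env := fun x => (ρ₁ x).orElse (fun _ => ρ₂ x)

def single (x : Var) (l : Loc) : Env := updFn emptyEnv x l

def envIm (ρ : Env) : Set Loc := {l | ∃ x, ρ x = some l}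
def envDom (ρ : Env) : Set Var := {x | ρ x ≠ none}
def storeDom (s : Store) : Set Loc := {l | s l ≠ none}

open Classical in
/-- Cleaning of a store with respect to an environment. -/
noncomputable def clean (ρ : Env) (s : Store) : Store :=
  fun l => if l ∈ envIm ρ then none else s l

open Classical in
/-- Restriction of a store to a set of locations. -/
noncomputable def resStore (s : Store) (D : Set Loc) : Store :=
  fun l => if l ∈ D then s l else none

/-- Store extension: `t` agrees with `s` on `dom s`. -/
def StoreLe (s t : Store) : Prop := ∀ l ∈ storeDom s, t l = s l

/-- Environment binding a list of variables to a list of locations. -/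
def envOf (xs : List Var) (ls : List Loc) : Env := fun y => (xs.zip ls).lookup y

/-- Store updated with a list of locations bound to a list of values. -/
def updStore (s : Store) (ls : List Loc) (vs : List Val) : Store :=
  fun l => ((ls.zip vs).lookup l).orElse (fun _ => s l)

/-- Closures: parameters, body, captured variable environment,
    captured function environment. -/
inductive Clos : Type
  | mk (ps : List Var) (body : Tm) (ρ : Env) (F : List (Var × Clos))

abbrev FEnv := List (Var × Clos)

def lookupF (F : FEnv) (f : Var) : Option Clos := F.lookup f

/-- `LocIn l F`: the location `l` appears in `F`
    (in some environment captured, recursively, in a closure of `F`). -/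
inductive LocIn : Loc → FEnv → Prop
  | env {l : Loc} {F : FEnv} {f ps body ρ F'} :
      (f, Clos.mk ps body ρ F') ∈ F → l ∈ envIm ρ → LocIn l F
  | deep {l : Loc} {F : FEnv} {f ps body ρ F'} :
      (f, Clos.mk ps body ρ F') ∈ F → LocIn l F' → LocIn l F

/-! ### Naive big-step reduction rules (with derivation height) -/

mutual
inductive EvalN : Nat → Env → FEnv → Tm → Store → Val → Store → Prop
  | val {ρ : Env} {F : FEnv} {v s} : EvalN 1 ρ F (.val v) s v s
  | var {ρ : Env} {F : FEnv} {x l s w} :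
      ρ x = some l → s l = some w → EvalN 1 ρ F (.var x) s w s
  | assign {n} {ρ : Env} {F : FEnv} {a s v s' x l} :
      EvalN n ρ F a s v s' → ρ x = some l → l ∈ storeDom s' →
      EvalN (n+1) ρ F (.assign x a) s .unit (updFn s' l v)
  | seq {n m} {ρ : Env} {F : FEnv} {a b s v s' v' s''} :
      EvalN n ρ F a s v s' → EvalN m ρ F b s' v' s'' →
      EvalN (n+m+1) ρ F (.seq a b) s v' s''
  | ifT {n m} {ρ : Env} {F : FEnv} {c b e s s' v s''} :
      EvalN n ρ F c s .tt s' → EvalN m ρ F b s' v s'' →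
      EvalN (n+m+1) ρ F (.ite c b e) s v s''
  | ifF {n m} {ρ : Env} {F : FEnv} {c b e s s' v s''} :
      EvalN n ρ F c s .ff s' → EvalN m ρ F e s' v s'' →
      EvalN (n+m+1) ρ F (.ite c b e) s v s''
  | letrec {n} {ρ : Env} {F : FEnv} {f ps a b s v s'} :
      EvalN n ρ ((f, Clos.mk ps a ρ F) :: F) b s v s' →
      EvalN (n+1) ρ F (.letrec f ps a b) s v s'
  | call {n m} {ρ : Env} {F : FEnv} {f args s₁ vs s₂ xs b} {ρ' : Env} {F' : FEnv}
      {ls : List Loc} {v s'} :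
      lookupF F f = some (Clos.mk xs b ρ' F') →
      EvalNArgs n ρ F args s₁ vs s₂ →
      ls.length = xs.length → vs.length = xs.length → ls.Nodup →
      (∀ l ∈ ls, l ∉ storeDom s₂ ∧ ¬ LocIn l ((f, Clos.mk xs b ρ' F') :: F')) →
      EvalN m (envCat (envOf xs ls) ρ') ((f, Clos.mk xs b ρ' F') :: F')
        b (updStore s₂ ls vs) v s' →
      EvalN (n+m+1) ρ F (.call f args) s₁ v s'

inductive EvalNArgs : Nat → Env → FEnv → List Tm → Store → List Val → Store → Prop
  | nil {ρ : Env} {F : FEnv} {s} : EvalNArgs 0 ρ F [] s [] s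
  | cons {n m} {ρ : Env} {F : FEnv} {a as s v s' vs s''} :
      EvalN n ρ F a s v s' → EvalNArgs m ρ F as s' vs s'' →
      EvalNArgs (n+m) ρ F (a :: as) s (v :: vs) s''
end

/-! ### Intermediate big-step reduction rules (split environments,
      minimal stores, non-compact closures) -/

mutual
inductive EvalI : Nat → Env → Env → FEnv → Tm → Store → Val → Store → Prop
  | val {ρT ρ : Env} {F : FEnv} {v s} :
      EvalI 1 ρT ρ F (.val v) s v (clean ρT s)
  | var {ρT ρ : Env} {F : FEnv} {x l s w} :
      envCat ρT ρ x = some l → s l = some w →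
      EvalI 1 ρT ρ F (.var x) s w (clean ρT s)
  | assign {n} {ρT ρ : Env} {F : FEnv} {a s v s' x l} :
      EvalI n emptyEnv (envCat ρT ρ) F a s v s' →
      envCat ρT ρ x = some l → l ∈ storeDom s' →
      EvalI (n+1) ρT ρ F (.assign x a) s .unit (clean ρT (updFn s' l v))
  | seq {n m} {ρT ρ : Env} {F : FEnv} {a b s v s' v' s''} :
      EvalI n emptyEnv (envCat ρT ρ) F a s v s' → EvalI m ρT ρ F b s' v' s'' →
      EvalI (n+m+1) ρT ρ F (.seq a b) s v' s''
  | ifT {n m} {ρT ρ : Env} {F : FEnv} {c b e s s' v s''} :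
      EvalI n emptyEnv (envCat ρT ρ) F c s .tt s' → EvalI m ρT ρ F b s' v s'' →
      EvalI (n+m+1) ρT ρ F (.ite c b e) s v s''
  | ifF {n m} {ρT ρ : Env} {F : FEnv} {c b e s s' v s''} :
      EvalI n emptyEnv (envCat ρT ρ) F c s .ff s' → EvalI m ρT ρ F e s' v s'' →
      EvalI (n+m+1) ρT ρ F (.ite c b e) s v s''
  | letrec {n} {ρT ρ : Env} {F : FEnv} {f ps a b s v s'} :
      EvalI n ρT ρ ((f, Clos.mk ps a (envCat ρT ρ) F) :: F) b s v s' →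
      EvalI (n+1) ρT ρ F (.letrec f ps a b) s v s'
  | call {n m} {ρT ρ : Env} {F : FEnv} {f args s₁ vs s₂ xs b} {ρ' : Env} {F' : FEnv}
      {ls : List Loc} {v s'} :
      lookupF F f = some (Clos.mk xs b ρ' F') →
      EvalIArgs n (envCat ρT ρ) F args s₁ vs s₂ →
      ls.length = xs.length → vs.length = xs.length → ls.Nodup →
      (∀ l ∈ ls, l ∉ storeDom s₂ ∧ ¬ LocIn l ((f, Clos.mk xs b ρ' F') :: F')) →
      EvalI m (envOf xs ls) ρ' ((f, Clos.mk xs b ρ' F') :: F')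
        b (updStore s₂ ls vs) v s' →
      EvalI (n+m+1) ρT ρ F (.call f args) s₁ v (clean ρT s')

inductive EvalIArgs : Nat → Env → FEnv → List Tm → Store → List Val → Store → Prop
  | nil {ρ : Env} {F : FEnv} {s} : EvalIArgs 0 ρ F [] s [] s
  | cons {n m} {ρ : Env} {F : FEnv} {a as s v s' vs s''} :
      EvalI n emptyEnv ρ F a s v s' → EvalIArgs m ρ F as s' vs s'' →
      EvalIArgs (n+m) ρ F (a :: as) s (v :: vs) s''
end

/-- Restriction of an environment outside a list of variables. -/
def restrictEnv (ρ : Env) (ps : List Var) : Env :=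
  fun x => if x ∈ ps then none else ρ x

/-! ### Optimised big-step reduction rules (minimal stores and compact
      closures): identical to the intermediate rules except that the
      (letrec) rule builds compact closures -/

mutual
inductive EvalO : Nat → Env → Env → FEnv → Tm → Store → Val → Store → Prop
  | val {ρT ρ : Env} {F : FEnv} {v s} :
      EvalO 1 ρT ρ F (.val v) s v (clean ρT s)
  | var {ρT ρ : Env} {F : FEnv} {x l s w} :
      envCat ρT ρ x = some l → s l = some w →
      EvalO 1 ρT ρ F (.var x) s w (clean ρT s)
  | assign {n} {ρT ρ : Env} {F : FEnv} {a s v s' x l} :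
      EvalO n emptyEnv (envCat ρT ρ) F a s v s' →
      envCat ρT ρ x = some l → l ∈ storeDom s' →
      EvalO (n+1) ρT ρ F (.assign x a) s .unit (clean ρT (updFn s' l v))
  | seq {n m} {ρT ρ : Env} {F : FEnv} {a b s v s' v' s''} :
      EvalO n emptyEnv (envCat ρT ρ) F a s v s' → EvalO m ρT ρ F b s' v' s'' →
      EvalO (n+m+1) ρT ρ F (.seq a b) s v' s''
  | ifT {n m} {ρT ρ : Env} {F : FEnv} {c b e s s' v s''} :
      EvalO n emptyEnv (envCat ρT ρ) F c s .tt s' → EvalO m ρT ρ F b s' v s'' →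
      EvalO (n+m+1) ρT ρ F (.ite c b e) s v s''
  | ifF {n m} {ρT ρ : Env} {F : FEnv} {c b e s s' v s''} :
      EvalO n emptyEnv (envCat ρT ρ) F c s .ff s' → EvalO m ρT ρ F e s' v s'' →
      EvalO (n+m+1) ρT ρ F (.ite c b e) s v s''
  | letrec {n} {ρT ρ : Env} {F : FEnv} {f ps a b s v s'} :
      EvalO n ρT ρ ((f, Clos.mk ps a (restrictEnv (envCat ρT ρ) ps) F) :: F) b s v s' →
      EvalO (n+1) ρT ρ F (.letrec f ps a b) s v s'
  | call {n m} {ρT ρ : Env} {F : FEnv} {f args s₁ vs s₂ xs b} {ρ' : Env} {F' : FEnv}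
      {ls : List Loc} {v s'} :
      lookupF F f = some (Clos.mk xs b ρ' F') →
      EvalOArgs n (envCat ρT ρ) F args s₁ vs s₂ →
      ls.length = xs.length → vs.length = xs.length → ls.Nodup →
      (∀ l ∈ ls, l ∉ storeDom s₂ ∧ ¬ LocIn l ((f, Clos.mk xs b ρ' F') :: F')) →
      EvalO m (envOf xs ls) ρ' ((f, Clos.mk xs b ρ' F') :: F')
        b (updStore s₂ ls vs) v s' →
      EvalO (n+m+1) ρT ρ F (.call f args) s₁ v (clean ρT s')

inductive EvalOArgs : Nat → Env → FEnv → List Tm → Store → List Val → Store → Prop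
  | nil {ρ : Env} {F : FEnv} {s} : EvalOArgs 0 ρ F [] s [] s
  | cons {n m} {ρ : Env} {F : FEnv} {a as s v s' vs s''} :
      EvalO n emptyEnv ρ F a s v s' → EvalOArgs m ρ F as s' vs s'' →
      EvalOArgs (n+m) ρ F (a :: as) s (v :: vs) s''
end


/-- Lambda-lifted terms contain no `letrec` construct. -/
inductive NoLetrec : Tm → Prop
  | val {v} : NoLetrec (.val v)
  | var {x} : NoLetrec (.var x)
  | assign {x t} : NoLetrec t → NoLetrec (.assign x t)
  | ite {c t e} : NoLetrec c → NoLetrec t → NoLetrec e → NoLetrec (.ite c t e)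
  | seq {a b} : NoLetrec a → NoLetrec b → NoLetrec (.seq a b)
  | call {f args} : (∀ a ∈ args, NoLetrec a) → NoLetrec (.call f args)

mutual
/-- A closure of a lambda-lifted program: it captures the empty variable
environment and its body is letrec-free. -/
inductive ClosLifted : Clos → Prop
  | mk {ps b F} : NoLetrec b → FLifted F → ClosLifted (.mk ps b emptyEnv F)

/-- A function environment of a lambda-lifted program. -/
inductive FLifted : FEnv → Prop
  | nil : FLifted []
  | cons {f c F} : ClosLifted c → FLifted F → FLifted ((f, c) :: F)
end
/-- Expressions: values or variables. -/
inductive IsExpr : Tm → Prop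
  | val {v} : IsExpr (.val v)
  | var {x} : IsExpr (.var x)

/-- Nested function calls `F̂ ::= f(e,…,e) | f(e,…,e,F̂)`. -/
inductive NCall : Tm → Prop
  | base {f args} : (∀ a ∈ args, IsExpr a) → NCall (.call f args)
  | nest {f args F} : (∀ a ∈ args, IsExpr a) → NCall F →
      NCall (.call f (args ++ [F]))

/-- Tails `Q ::= ε | Q ; F̂`. -/
inductive IsTail : Tm → Prop
  | eps : IsTail (.val .unit)
  | seq {Q F} : IsTail Q → NCall F → IsTail (.seq Q F)

/-! ### Auxiliary lemmas -/

lemma lookup_mem_snd : ∀ {xs : List Var} {ls : List Loc} {x : Var} {l : Loc},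
    (xs.zip ls).lookup x = some l → l ∈ ls := by
  intro xs
  induction xs with
  | nil => intro ls x l h; simp [List.lookup] at h
  | cons a as ih =>
    intro ls x l h
    cases ls with
    | nil => simp [List.lookup] at h
    | cons b bs =>
      simp only [List.zip_cons_cons, List.lookup] at h
      by_cases hx : x = a
      · simp [hx] at h; simp [h]
      · have : (x == a) = false := by simp [hx]
        rw [this] at h
        exact List.mem_cons_of_mem _ (ih h)

lemma lookup_none_of_not_mem : ∀ {ls : List Loc} {vs : List Val} {l : Loc},
    l ∉ ls → (ls.zip vs).lookup l = none := by
  intro ls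
  induction ls with
  | nil => intro vs l _; simp [List.lookup]
  | cons a as ih =>
    intro vs l h
    cases vs with
    | nil => simp [List.lookup]
    | cons b bs =>
      simp only [List.zip_cons_cons, List.lookup]
      have hne : l ≠ a := fun he => h (he ▸ List.mem_cons_self)
      have : (l == a) = false := by simp [hne]
      rw [this]
      exact ih (fun hm => h (List.mem_cons_of_mem _ hm))

lemma flifted_lookup : ∀ {F : FEnv} {f : Var} {c : Clos},
    FLifted F → lookupF F f = some c → ClosLifted c := by
  intro F
  induction F with
  | nil => intro f c _ h; simp [lookupF, List.lookup] at h
  | cons p ps ih =>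
    intro f c hF h
    obtain ⟨g, c'⟩ := p
    cases hF with
    | cons hc hps =>
      simp only [lookupF, List.lookup] at h
      by_cases hf : f = g
      · simp [hf] at h; exact h ▸ hc
      · have : (f == g) = false := by simp [hf]
        rw [this] at h
        exact ih hps h

lemma evalN_pos : ∀ {n ρ F t s v s'}, EvalN n ρ F t s v s' → 1 ≤ n := by
  intro n ρ F t s v s' h
  cases h <;> omega

lemma orElse_none' (o : Option Loc) : (o.orElse fun _ => none) = o := by
  cases o <;> rfl

/-- Frame lemma: lambda-lifted terms only modify locations in the image of
the current environment. -/
lemma frame : ∀ N : Nat,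
    (∀ {ρ : Env} {F : FEnv} {t s v s'}, EvalN N ρ F t s v s' → NoLetrec t → FLifted F →
      ∀ l, s l ≠ none → l ∉ envIm ρ → s' l = s l) ∧
    (∀ {ρ : Env} {F : FEnv} {ts s vs s'}, EvalNArgs N ρ F ts s vs s' →
      (∀ t ∈ ts, NoLetrec t) → FLifted F →
      ∀ l, s l ≠ none → l ∉ envIm ρ → s' l = s l) := by
  intro N
  induction N using Nat.strong_induction_on with
  | _ N IH =>
  have hA : ∀ {ρ : Env} {F : FEnv} {t s v s'}, EvalN N ρ F t s v s' → NoLetrec t →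
      FLifted F → ∀ l, s l ≠ none → l ∉ envIm ρ → s' l = s l := by
    intro ρ F t s v s' h hnl hF l hl hlρ
    cases h with
    | val => rfl
    | var _ _ => rfl
    | @assign n ρ F a s v₁ s₁ x l' ha hx hdom =>
      have h1 : s₁ l = s l := (IH n (by omega)).1 ha (by cases hnl; assumption) hF l hl hlρ
      have hne : l ≠ l' := fun he => hlρ ⟨x, he ▸ hx⟩
      simp [updFn, hne, h1]
    | @seq n m ρ F a b s v₁ s₁ v₂ s₂ ha hb =>
      cases hnl with
      | seq hna hnb =>
        have h1 : s₁ l = s l := (IH n (by omega)).1 ha hna hF l hl hlρ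
        have h2 : s' l = s₁ l := (IH m (by omega)).1 hb hnb hF l (h1 ▸ hl) hlρ
        rw [h2, h1]
    | @ifT n m ρ F c b e s s₁ v₁ s₂ hc hb =>
      cases hnl with
      | ite hnc hnb hne =>
        have h1 : s₁ l = s l := (IH n (by omega)).1 hc hnc hF l hl hlρ
        have h2 : s' l = s₁ l := (IH m (by omega)).1 hb hnb hF l (h1 ▸ hl) hlρ
        rw [h2, h1]
    | @ifF n m ρ F c b e s s₁ v₁ s₂ hc he =>
      cases hnl with
      | ite hnc hnb hne =>
        have h1 : s₁ l = s l := (IH n (by omega)).1 hc hnc hF l hl hlρ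
        have h2 : s' l = s₁ l := (IH m (by omega)).1 he hne hF l (h1 ▸ hl) hlρ
        rw [h2, h1]
    | letrec _ => cases hnl
    | @call n m ρ F f args s₁ vs s₂ xs b ρ' F' ls v₁ s₂' hlook hargs hlen hvlen hnd hfresh hbody =>
      have hnargs : ∀ a ∈ args, NoLetrec a := by cases hnl; assumption
      have h1 : s₂ l = s l := (IH n (by omega)).2 hargs hnargs hF l hl hlρ
      have hcl : ClosLifted (Clos.mk xs b ρ' F') := flifted_lookup hF hlook
      cases hcl with
      | mk hnb hF' =>
        have hldom : l ∈ storeDom s₂ := by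
          simp only [storeDom, Set.mem_setOf_eq]; rw [h1]; exact hl
        have hnotls : l ∉ ls := fun hm => (hfresh l hm).1 hldom
        have hupd : updStore s₂ ls vs l = s₂ l := by
          simp [updStore, lookup_none_of_not_mem hnotls]
        have him : l ∉ envIm (envCat (envOf xs ls) emptyEnv) := by
          rintro ⟨x, hx⟩
          simp only [envCat, emptyEnv] at hx
          have hx' : envOf xs ls x = some l := by
            rw [orElse_none'] at hx; exact hx
          exact hnotls (lookup_mem_snd hx')
        have h2 : s' l = updStore s₂ ls vs l :=
          (IH m (by omega)).1 hbody hnb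
            (FLifted.cons (ClosLifted.mk hnb hF') hF') l
            (by rw [hupd, h1]; exact hl) him
        rw [h2, hupd, h1]
  refine ⟨fun h => hA h, ?_⟩
  intro ρ F ts s vs s' h hnl hF l hl hlρ
  cases h with
  | nil => rfl
  | @cons n m ρ F a as s v s₁ vs₁ s₂ ha has =>
    have hn1 : 1 ≤ n := evalN_pos ha
    have h1 : s₁ l = s l := by
      rcases Nat.lt_or_ge n (n + m) with hlt | hge
      · exact (IH n hlt).1 ha (hnl a (List.mem_cons_self)) hF l hl hlρ
      · have hEq : n = n + m := by omega
        exact hA (hEq ▸ ha) (hnl a (List.mem_cons_self)) hF l hl hlρ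
    have h2 : s' l = s₁ l :=
      (IH m (by omega)).2 has (fun t ht => hnl t (List.mem_cons_of_mem _ ht)) hF l
        (h1 ▸ hl) hlρ
    rw [h2, h1]

lemma isExpr_eval : ∀ {n ρ F t s v s'}, EvalN n ρ F t s v s' → IsExpr t → s' = s := by
  intro n ρ F t s v s' h he
  cases he <;> cases h <;> rfl

lemma argsExt : ∀ {n : Nat} {ρ : Env} {F : FEnv} {ts s vs s'},
    EvalNArgs n ρ F ts s vs s' → (∀ t ∈ ts, IsExpr t ∨ NCall t) → FLifted F →
    (∀ k ≤ n, ∀ {ρ : Env} {F : FEnv} {t s v s'}, EvalN k ρ F t s v s' → NCall t →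
      FLifted F → ∀ l, s l ≠ none → s' l = s l) →
    ∀ l, s l ≠ none → s' l = s l := by
  intro n ρ F ts s vs s' h hts hF hP l hl
  induction ts generalizing n s vs l with
  | nil => cases h; rfl
  | cons a as ih =>
    cases h with
    | @cons n₁ m₁ _ _ _ _ _ v₁ s₁ vs₁ _ ha has =>
      have h1 : s₁ l = s l := by
        rcases hts a (List.mem_cons_self) with he | hc
        · rw [isExpr_eval ha he]
        · exact hP n₁ (by omega) ha hc hF l hl
      have h2 : s' l = s₁ l :=
        ih has (fun t ht => hts t (List.mem_cons_of_mem _ ht))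
          (fun k hk => hP k (by omega)) l (h1 ▸ hl)
      rw [h2, h1]

lemma ncall_ext : ∀ (N : Nat) {ρ : Env} {F : FEnv} {t s v s'},
    EvalN N ρ F t s v s' → NCall t → FLifted F → ∀ l, s l ≠ none → s' l = s l := by
  intro N
  induction N using Nat.strong_induction_on with
  | _ N IH =>
  intro ρ F t s v s' h hnc hF l hl
  cases h with
  | val => rfl
  | var _ _ => rfl
  | assign _ _ _ => cases hnc
  | seq _ _ => cases hnc
  | ifT _ _ => cases hnc
  | ifF _ _ => cases hnc
  | letrec _ => cases hnc
  | @call n m ρ F f args s₁ vs s₂ xs b ρ' F' ls v₁ s₂' hlook hargs hlen hvlen hnd hfresh hbody =>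
    have hargs' : ∀ a ∈ args, IsExpr a ∨ NCall a := by
      cases hnc with
      | base he => exact fun a ha => Or.inl (he a ha)
      | nest he hc =>
        intro a ha
        rcases List.mem_append.mp ha with h' | h'
        · exact Or.inl (he a h')
        · simp at h'; exact Or.inr (h' ▸ hc)
    have h1 : s₂ l = s l :=
      argsExt hargs hargs' hF (fun k hk => IH k (by omega)) l hl
    have hcl : ClosLifted (Clos.mk xs b ρ' F') := flifted_lookup hF hlook
    cases hcl with
    | mk hnb hF' =>
      have hldom : l ∈ storeDom s₂ := by
        simp only [storeDom, Set.mem_setOf_eq]; rw [h1]; exact hl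
      have hnotls : l ∉ ls := fun hm => (hfresh l hm).1 hldom
      have hupd : updStore s₂ ls vs l = s₂ l := by
        simp [updStore, lookup_none_of_not_mem hnotls]
      have him : l ∉ envIm (envCat (envOf xs ls) emptyEnv) := by
        rintro ⟨x, hx⟩
        simp only [envCat, emptyEnv] at hx
        have hx' : envOf xs ls x = some l := by
          rw [orElse_none'] at hx; exact hx
        exact hnotls (lookup_mem_snd hx')
      have h2 : s' l = updStore s₂ ls vs l :=
        (frame m).1 hbody hnb (FLifted.cons (ClosLifted.mk hnb hF') hF') l
          (by rw [hupd, h1]; exact hl) him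
      rw [h2, hupd, h1]

/-- tails do not modify existing store locations. -/
theorem tail_store_extension
    {n : Nat} {ρ : Env} {F : FEnv} {Q : Tm} {s s' : Store} {v : Val}
    (hQ : IsTail Q) (hF : FLifted F)
    (h : EvalN n ρ F Q s v s') :
    StoreLe s s' := by
  induction hQ generalizing n s s' v with
  | eps =>
    cases h
    intro l _; rfl
  | @seq Q C hQ' hC ih =>
    cases h with
    | @seq n m _ _ _ _ _ v₁ s₁ v₂ s₂ hq hc =>
      intro l hl
      have h1 : s₁ l = s l := ih hq l hl
      have h2 : s' l = s₁ l := ncall_ext m hc hC hF l (h1 ▸ hl)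
      rw [h2, h1]

end CPC
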